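/- Let c > 3/2 and μ ∈ (0,1), and suppose that for all (v,u) in the compact component Σ_{μ,c} of K_{μ,c}⁻¹(0) one has |u|² < ε and |v|² < ε, where ε < min{(2c-3)/(3C+8), 1/(2C), 1/4} and C > 3 is the universal constant bounding the error terms of the Hessian. Then there exists δ = δ(μ,c) > 0 such that D²K_{μ,c}(v,u)[(û,v̂),(û,v̂)] ≥ δ(|û|² + |v̂|²) for all (v,u) ∈ Σ_{μ,c} and all (û,v̂) ∈ ℂ². In particular K_{μ,c} is strongly convex on a neighborhood of Σ_{μ,c}. -/

import Mathlib

open Complex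

/-- `⟨a, i b⟩ = a₂b₁ - a₁b₂`. -/
def iprod (a b : ℂ) : ℝ := a.im * b.re - a.re * b.im

/-- The regularized Hamiltonian `K_{μ,c}` in Levi-Civita coordinates `(v,u)`. -/
noncomputable def Kreg (μ c : ℝ) : ℂ × ℂ → ℝ :=
  fun p => (1 / 2) * ‖p.2‖ ^ 2 + c * ‖p.1‖ ^ 2 + 2 * ‖p.1‖ ^ 2 * iprod p.2 p.1
    - μ * (p.2 * p.1).im - μ * ‖p.1‖ ^ 2 / ‖2 * p.1 ^ 2 - 1‖ - (1 - μ) / 2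

lemma aux_ineq (c μ k ε δ e1 e2 : ℝ) (hc : 3 / 2 < c) (hμ0 : 0 < μ) (hμ1 : μ < 1)
    (hk0 : 0 < k) (hk : k < 1 / 2) (hε : 0 < ε)
    (hd1 : δ ≤ (1 - k) * (1 - μ)) (hd2 : δ ≤ 2 * c - 3 - 3 * k - 8 * ε)
    (he1 : 0 ≤ e1) (he2 : 0 ≤ e2) :
    δ * (e1 ^ 2 + e2 ^ 2) ≤ e1 ^ 2 + 2 * c * e2 ^ 2 - k * (e1 ^ 2 + e2 ^ 2)
      - 2 * μ * (e1 * e2) - 2 * μ * (1 + 4 * ε) * e2 ^ 2 := by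
  have hy : 2 * (e1 * e2) ≤ (1 - k) * e1 ^ 2 + (1 + 2 * k) * e2 ^ 2 := by
    nlinarith [sq_nonneg ((1 - k) * e1 - e2),
      mul_nonneg (mul_nonneg hk0.le (by linarith : (0:ℝ) ≤ 1 - 2 * k)) (sq_nonneg e2)]
  have hyμ : μ * (2 * (e1 * e2)) ≤ μ * ((1 - k) * e1 ^ 2 + (1 + 2 * k) * e2 ^ 2) :=
    mul_le_mul_of_nonneg_left hy hμ0.le
  have hA : δ * e1 ^ 2 ≤ (1 - k) * (1 - μ) * e1 ^ 2 :=
    mul_le_mul_of_nonneg_right hd1 (sq_nonneg e1)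
  have hB : δ * e2 ^ 2 ≤ (2 * c - 3 - 3 * k - 8 * ε) * e2 ^ 2 :=
    mul_le_mul_of_nonneg_right hd2 (sq_nonneg e2)
  have hC0 : 0 ≤ (1 - μ) * (3 + 2 * k + 8 * ε) * e2 ^ 2 :=
    mul_nonneg (mul_nonneg (by linarith) (by linarith)) (sq_nonneg e2)
  nlinarith [hyμ, hA, hB, hC0]

theorem strong_convexity_on_energy_surface
    (c μ C ε : ℝ) (hc : 3 / 2 < c) (hμ : μ ∈ Set.Ioo (0 : ℝ) 1) (hC : 3 < C)
    (hε : 0 < ε)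
    (hεmin : ε < min ((2 * c - 3) / (3 * C + 8)) (min (1 / (2 * C)) (1 / 4)))
    (S : Set (ℂ × ℂ)) (hScomp : IsCompact S)
    (hSsub : S ⊆ {p | Kreg μ c p = 0})
    (hSsmall : ∀ p ∈ S, ‖p.2‖ ^ 2 < ε ∧ ‖p.1‖ ^ 2 < ε)
    -- `C` is the universal constant bounding the error terms of the Hessian:
    (hCbound : ∀ v u : ℂ, ‖u‖ ^ 2 < ε → ‖v‖ ^ 2 < ε → ∀ uh vh : ℂ,
      fderiv ℝ (fderiv ℝ (Kreg μ c)) (v, u) (vh, uh) (vh, uh)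
        ≥ ‖uh‖ ^ 2 + 2 * c * ‖vh‖ ^ 2 - C * ε * (‖uh‖ ^ 2 + ‖vh‖ ^ 2)
          - 2 * μ * |(uh * vh).im| - 2 * μ * ‖vh‖ ^ 2 / ‖2 * v ^ 2 - 1‖) :
    ∃ δ > (0 : ℝ), ∀ p ∈ S, ∀ uh vh : ℂ,
      fderiv ℝ (fderiv ℝ (Kreg μ c)) p (vh, uh) (vh, uh)
        ≥ δ * (‖uh‖ ^ 2 + ‖vh‖ ^ 2) := by
  obtain ⟨hμ0, hμ1⟩ := hμ
  have hε1 : ε < (2 * c - 3) / (3 * C + 8) := lt_of_lt_of_le hεmin (min_le_left _ _)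
  have hε2 : ε < 1 / (2 * C) :=
    lt_of_lt_of_le hεmin ((min_le_right _ _).trans (min_le_left _ _))
  have hε3 : ε < 1 / 4 :=
    lt_of_lt_of_le hεmin ((min_le_right _ _).trans (min_le_right _ _))
  have hC0 : (0:ℝ) < C := by linarith
  have hCε : C * ε < 1 / 2 := by
    have := (lt_div_iff₀ (by linarith : (0:ℝ) < 2 * C)).mp hε2
    nlinarith
  have hCε0 : 0 < C * ε := mul_pos hC0 hε
  have h38 : (3 * C + 8) * ε < 2 * c - 3 := by
    have := (lt_div_iff₀ (by linarith : (0:ℝ) < 3 * C + 8)).mp hε1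
    linarith
  refine ⟨min ((1 - C * ε) * (1 - μ)) (2 * c - 3 - (3 * C + 8) * ε), ?_, ?_⟩
  · apply lt_min
    · exact mul_pos (by linarith) (by linarith)
    · linarith
  intro p hp uh vh
  obtain ⟨hu, hv⟩ := hSsmall p hp
  have hb := hCbound p.1 p.2 hu hv uh vh
  refine le_trans ?_ hb
  have he1n : (0:ℝ) ≤ ‖uh‖ := norm_nonneg _
  have he2n : (0:ℝ) ≤ ‖vh‖ := norm_nonneg _
  have hq : 1 - 2 * ε ≤ ‖2 * p.1 ^ 2 - 1‖ := by
    have h1 : ‖(1:ℂ)‖ - ‖2 * p.1 ^ 2‖ ≤ ‖1 - 2 * p.1 ^ 2‖ := norm_sub_norm_le _ _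
    rw [norm_sub_rev] at h1
    have h2 : ‖2 * p.1 ^ 2‖ = 2 * ‖p.1‖ ^ 2 := by
      rw [norm_mul, norm_pow]; norm_num
    have h3 : ‖(1:ℂ)‖ = 1 := norm_one
    linarith
  have hq0 : (0:ℝ) < ‖2 * p.1 ^ 2 - 1‖ := by linarith
  have hqdiv : 2 * μ * ‖vh‖ ^ 2 / ‖2 * p.1 ^ 2 - 1‖ ≤ 2 * μ * (1 + 4 * ε) * ‖vh‖ ^ 2 := by
    rw [div_le_iff₀ hq0]
    have hsq : (0:ℝ) ≤ ‖vh‖ ^ 2 := sq_nonneg _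
    nlinarith [mul_nonneg hμ0.le hsq, mul_nonneg (mul_nonneg hμ0.le hsq) hε.le]
  have him : |(uh * vh).im| ≤ ‖uh‖ * ‖vh‖ := by
    calc |(uh * vh).im| ≤ ‖uh * vh‖ := Complex.abs_im_le_norm _
    _ = ‖uh‖ * ‖vh‖ := by rw [norm_mul]
  have himμ : 2 * μ * |(uh * vh).im| ≤ 2 * μ * (‖uh‖ * ‖vh‖) := by
    have := mul_le_mul_of_nonneg_left him (by linarith : (0:ℝ) ≤ 2 * μ)
    linarith
  have hmain := aux_ineq c μ (C * ε) ε
      (min ((1 - C * ε) * (1 - μ)) (2 * c - 3 - (3 * C + 8) * ε)) ‖uh‖ ‖vh‖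
      hc hμ0 hμ1 hCε0 hCε hε (min_le_left _ _)
      (by have := min_le_right ((1 - C * ε) * (1 - μ)) (2 * c - 3 - (3 * C + 8) * ε); linarith)
      he1n he2n
  linarith
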